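/- Let n ≡ 0 (mod 4) and let A ⊆ 𝔽₂ⁿ be a subset such that for all distinct x, x' ∈ A the Hamming weight wt(x+x') is not a multiple of 4. Then |A| ≤ 2n. (In particular, there is no Hurwitzian set of cardinality ρ(2ⁿ) = 2n+1 in this case.) -/

import Mathlib

lemma zmod2_aux (a b : ZMod 2) :
    ((if a + b ≠ 0 then 1 else 0) + 2 * if a * b ≠ 0 then 1 else 0 : ℕ) =
      (if a ≠ 0 then 1 else 0) + if b ≠ 0 then 1 else 0 := by revert a b; decide

lemma wt_add (n : ℕ) (x y : Fin n → ZMod 2) :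
    hammingNorm (x + y) + 2 * hammingNorm (x * y) = hammingNorm x + hammingNorm y := by
  simp only [hammingNorm, Finset.card_filter, Finset.mul_sum, ← Finset.sum_add_distrib]
  exact Finset.sum_congr rfl fun i _ => zmod2_aux (x i) (y i)

lemma zmod2_aux2 (a : ZMod 2) : a = ((if a ≠ 0 then 1 else 0 : ℕ) : ZMod 2) := by
  revert a; decide

lemma sum_eq_wt (n : ℕ) (z : Fin n → ZMod 2) :
    (∑ i, z i) = (hammingNorm z : ZMod 2) := by
  rw [hammingNorm, Finset.card_filter, Nat.cast_sum]
  exact Finset.sum_congr rfl fun i _ => zmod2_aux2 (z i)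

lemma parity_card (m : ℕ) :
    ({v : Fin (m+1) → ZMod 2 | ∑ i, v i = 0} : Finset _).card = 2^m := by
  have := Finset.card_nbij' (s := ({v : Fin (m+1) → ZMod 2 | ∑ i, v i = 0} : Finset _))
    (t := (Finset.univ : Finset (Fin m → ZMod 2)))
    (fun v => Fin.init v) (fun w => Fin.snoc w (∑ i, w i))
    (by intro v hv; simp)
    (by
      intro w _
      simp only [Finset.mem_filter, Finset.mem_univ, true_and, Finset.mem_coe,
        Set.mem_setOf_eq]
      rw [Fin.sum_univ_castSucc]
      simp only [Fin.snoc_castSucc, Fin.snoc_last]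
      exact CharTwo.add_self_eq_zero _)
    (by
      intro v hv
      simp only [Finset.mem_coe, Set.mem_setOf_eq, Finset.mem_filter] at hv
      have hsum : ∑ i, Fin.init v i = v (Fin.last m) := by
        have h := hv.2
        rw [Fin.sum_univ_castSucc] at h
        have h2 : v (Fin.last m) = -(∑ i : Fin m, v i.castSucc) :=
          (neg_eq_of_add_eq_zero_right h).symm
        rw [CharTwo.neg_eq] at h2
        simpa [Fin.init] using h2.symm
      show Fin.snoc (Fin.init v) (∑ i, Fin.init v i) = v
      rw [hsum]
      exact Fin.snoc_init_self v)
    (by intro w _; exact Fin.init_snoc _ _)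
  rw [this]
  simp [Finset.card_univ]

lemma indep_card (n : ℕ) (hn : 1 ≤ n) (S : Finset (Fin n → ZMod 2))
    (hS0 : ∀ s ∈ S, ∑ i, s i = 0)
    (hInd : ∀ T ⊆ S, T.Nonempty → ∑ t ∈ T, t ≠ 0) :
    S.card ≤ n - 1 := by
  obtain ⟨m, rfl⟩ : ∃ m, n = m + 1 := ⟨n - 1, by omega⟩
  simp only [Nat.add_sub_cancel]
  have key : S.powerset.card ≤ ({v : Fin (m+1) → ZMod 2 | ∑ i, v i = 0} : Finset _).card := by
    apply Finset.card_le_card_of_injOn (fun T => ∑ t ∈ T, t)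
    · intro T hT
      simp only [Finset.coe_filter, Set.mem_setOf_eq, Finset.mem_coe, Finset.mem_filter,
        Finset.mem_univ, true_and]
      rw [Finset.mem_coe, Finset.mem_powerset] at hT
      have : ∑ i, (∑ t ∈ T, t) i = ∑ t ∈ T, ∑ i, t i := by
        simp only [Finset.sum_apply]
        exact Finset.sum_comm
      rw [this]
      exact Finset.sum_eq_zero fun t ht => hS0 t (hT ht)
    · intro T1 h1 T2 h2 heq
      simp only [Finset.mem_coe, Finset.mem_powerset] at h1 h2
      simp only at heq
      by_contra hne
      have hsum1 : ∑ t ∈ T1 \ T2, t + ∑ t ∈ T1 ∩ T2, t = ∑ t ∈ T1, t := by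
        rw [← Finset.sdiff_inter_self_left T1 T2]
        exact Finset.sum_sdiff Finset.inter_subset_left
      have hsum2 : ∑ t ∈ T2 \ T1, t + ∑ t ∈ T1 ∩ T2, t = ∑ t ∈ T2, t := by
        rw [Finset.inter_comm, ← Finset.sdiff_inter_self_left T2 T1]
        exact Finset.sum_sdiff Finset.inter_subset_left
      have hd : ∑ t ∈ T1 \ T2, t = ∑ t ∈ T2 \ T1, t := by
        have := hsum1.trans (heq.trans hsum2.symm)
        exact add_right_cancel this
      have hdisj : Disjoint (T1 \ T2) (T2 \ T1) := disjoint_sdiff_sdiff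
      have hzero : ∑ t ∈ (T1 \ T2) ∪ (T2 \ T1), t = 0 := by
        rw [Finset.sum_union hdisj, hd]
        exact CharTwo.add_self_eq_zero _
      have hsub : (T1 \ T2) ∪ (T2 \ T1) ⊆ S :=
        Finset.union_subset ((Finset.sdiff_subset).trans h1) ((Finset.sdiff_subset).trans h2)
      have hne' : ((T1 \ T2) ∪ (T2 \ T1)).Nonempty := by
        rw [Finset.nonempty_iff_ne_empty]
        intro h
        rw [Finset.union_eq_empty, Finset.sdiff_eq_empty_iff_subset,
          Finset.sdiff_eq_empty_iff_subset] at h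
        exact hne (Finset.Subset.antisymm h.1 h.2)
      exact hInd _ hsub hne' hzero
  rw [Finset.card_powerset, parity_card] at key
  exact (Nat.pow_le_pow_iff_right (by norm_num)).mp key

lemma class_card (n : ℕ) (hn : 1 ≤ n) (hneven : n % 2 = 0)
    (S : Finset (Fin n → ZMod 2))
    (h1 : ∀ s ∈ S, hammingNorm s % 4 = 2)
    (h2 : ∀ s ∈ S, ∀ s' ∈ S, s ≠ s' → hammingNorm (s + s') % 4 = 2) :
    S.card ≤ n - 1 := by
  -- each s has even weight
  have hS0 : ∀ s ∈ S, ∑ i, s i = 0 := by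
    intro s hs
    rw [sum_eq_wt]
    have := h1 s hs
    have h2d : 2 ∣ hammingNorm s := by omega
    exact (ZMod.natCast_eq_zero_iff _ 2).mpr h2d
  -- pairwise dot products are 1
  have hdot : ∀ s ∈ S, ∀ s' ∈ S, s ≠ s' → (∑ i, s i * s' i) = 1 := by
    intro s hs s' hs' hne
    have hw := wt_add n s s'
    have e1 := h1 s hs
    have e2 := h1 s' hs'
    have e3 := h2 s hs s' hs' hne
    have hodd : hammingNorm (s * s') % 2 = 1 := by omega
    have : (∑ i, s i * s' i) = (hammingNorm (s * s') : ZMod 2) := sum_eq_wt n (s * s')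
    rw [this, ← ZMod.natCast_mod, hodd]
    rfl
  -- any zero-sum nonempty subset is all of S and has odd cardinality
  have hdep : ∀ T ⊆ S, T.Nonempty → ∑ t ∈ T, t = 0 → T = S ∧ T.card % 2 = 1 := by
    intro T hTS hTne hTsum
    have key : ∀ s0 ∈ S, (∑ t ∈ T, ∑ i, t i * s0 i) = 0 := by
      intro s0 hs0
      rw [Finset.sum_comm]
      have : ∀ i, (∑ t ∈ T, t i * s0 i) = 0 := by
        intro i
        rw [← Finset.sum_mul]
        have : (∑ t ∈ T, t i) = (∑ t ∈ T, t) i := by rw [Finset.sum_apply]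
        rw [this, hTsum]
        simp
      simp [this]
    -- if s0 ∈ T : card T odd
    obtain ⟨t0, ht0⟩ := hTne
    have hodd : T.card % 2 = 1 := by
      have h := key t0 (hTS ht0)
      have hself : (∑ i, t0 i * t0 i) = 0 := by
        have hsq : ∀ i, t0 i * t0 i = t0 i := by
          intro i; generalize t0 i = a; revert a; decide
        simp only [hsq]
        exact hS0 t0 (hTS ht0)
      have hsplitT : ∑ t ∈ T, ∑ i, t i * t0 i
          = ∑ t ∈ T.erase t0, ∑ i, t i * t0 i + ∑ i, t0 i * t0 i :=
        (Finset.sum_erase_add T _ ht0).symm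
      have herase1 : ∑ t ∈ T.erase t0, ∑ i, t i * t0 i = ∑ t ∈ T.erase t0, (1 : ZMod 2) :=
        Finset.sum_congr rfl fun t ht => hdot t (hTS (Finset.mem_of_mem_erase ht)) t0
          (hTS ht0) (Finset.ne_of_mem_erase ht)
      rw [hsplitT, herase1, hself, add_zero, Finset.sum_const, nsmul_eq_mul, mul_one] at h
      have hcast : ((T.card - 1 : ℕ) : ZMod 2) = 0 := by
        rwa [Finset.card_erase_of_mem ht0] at h
      have := (ZMod.natCast_eq_zero_iff _ 2).mp hcast
      have hT1 : 1 ≤ T.card := Finset.card_pos.mpr ⟨t0, ht0⟩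
      omega
    constructor
    · -- T = S
      apply Finset.Subset.antisymm hTS
      intro s0 hs0
      by_contra hs0T
      have h := key s0 hs0
      have : ∑ t ∈ T, ∑ i, t i * s0 i = ∑ t ∈ T, (1 : ZMod 2) := by
        apply Finset.sum_congr rfl
        intro t ht
        exact hdot t (hTS ht) s0 hs0 (fun he => hs0T (he ▸ ht))
      rw [this, Finset.sum_const, nsmul_eq_mul, mul_one] at h
      have := (ZMod.natCast_eq_zero_iff _ 2).mp h
      omega
    · exact hodd
  by_cases hex : ∃ T ⊆ S, T.Nonempty ∧ ∑ t ∈ T, t = 0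
  · obtain ⟨T, hTS, hTne, hTsum⟩ := hex
    obtain ⟨hTeq, hToddc⟩ := hdep T hTS hTne hTsum
    subst hTeq
    obtain ⟨t1, ht1⟩ := hTne
    have herase : (T.erase t1).card ≤ n - 1 := by
      apply indep_card n hn
      · intro s hs; exact hS0 s (Finset.erase_subset _ _ hs)
      · intro T' hT' hT'ne hT'sum
        have := hdep T' (hT'.trans (Finset.erase_subset _ _)) hT'ne hT'sum
        have ht1T' : t1 ∈ T' := this.1 ▸ ht1
        exact (Finset.notMem_erase t1 T) (hT' ht1T')
    rw [Finset.card_erase_of_mem ht1] at herase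
    omega
  · push_neg at hex
    apply indep_card n hn S hS0
    intro T hT hTne
    exact hex T hT hTne

lemma class_le (n : ℕ) (hn : 1 ≤ n) (hneven : n % 2 = 0)
    (C : Finset (Fin n → ZMod 2))
    (hC : ∀ x ∈ C, ∀ x' ∈ C, x ≠ x' → hammingNorm (x + x') % 4 = 2) :
    C.card ≤ n := by
  rcases C.eq_empty_or_nonempty with h | ⟨a, ha⟩
  · simp [h]
  · set S : Finset (Fin n → ZMod 2) := (C.erase a).image (· + a) with hSdef
    have hinj : Function.Injective (· + a : (Fin n → ZMod 2) → _) := by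
      intro x y hxy
      have := congrArg (· + a) hxy
      simp only at this
      have key : ∀ z : Fin n → ZMod 2, z + a + a = z := by
        intro z
        have ha2 : a + a = 0 := by funext i; exact CharTwo.add_self_eq_zero _
        rw [add_assoc, ha2, add_zero]
      rwa [key, key] at this
    have hScard : S.card = C.card - 1 := by
      rw [hSdef, Finset.card_image_of_injective _ hinj, Finset.card_erase_of_mem ha]
    have haddself : ∀ x x' : Fin n → ZMod 2, (x + a) + (x' + a) = x + x' := by
      intro x x'
      have ha2 : a + a = 0 := by funext i; exact CharTwo.add_self_eq_zero _
      have : (x + a) + (x' + a) = (x + x') + (a + a) := by ring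
      rw [this, ha2, add_zero]
    have hb : S.card ≤ n - 1 := by
      apply class_card n hn hneven
      · intro s hs
        rw [hSdef] at hs
        obtain ⟨x, hx, rfl⟩ := Finset.mem_image.mp hs
        exact hC x (Finset.mem_of_mem_erase hx) a ha (Finset.ne_of_mem_erase hx)
      · intro s hs s' hs' hne
        rw [hSdef] at hs hs'
        obtain ⟨x, hx, rfl⟩ := Finset.mem_image.mp hs
        obtain ⟨x', hx', rfl⟩ := Finset.mem_image.mp hs'
        rw [haddself]
        exact hC x (Finset.mem_of_mem_erase hx) x' (Finset.mem_of_mem_erase hx')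
          (fun he => hne (he ▸ rfl))
    have hC1 : 1 ≤ C.card := Finset.card_pos.mpr ⟨a, ha⟩
    omega


/-- For `n ≡ 0 (mod 4)` (with `n ≥ 1`), any subset `A ⊆ 𝔽₂ⁿ` such that the
Hamming weight of `x + x'` is not a multiple of `4` for all distinct `x, x' ∈ A` satisfies
`|A| ≤ 2n`; in particular there is no Hurwitzian set of cardinality `ρ(2ⁿ) = 2n + 1` in
this case. -/
theorem no_hurwitzian_set_zero_mod_four (n : ℕ) (hn : 1 ≤ n) (h4 : n % 4 = 0)
    (A : Finset (Fin n → ZMod 2))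
    (hA : ∀ x ∈ A, ∀ x' ∈ A, x ≠ x' → ¬ (4 ∣ hammingNorm (x + x'))) :
    A.card ≤ 2 * n := by
  have hneven : n % 2 = 0 := by omega
  classical
  have hsplit := Finset.card_filter_add_card_filter_not
    (s := A) (p := fun x => hammingNorm x % 2 = 0)
  have hclass : ∀ (C : Finset (Fin n → ZMod 2)), C ⊆ A →
      (∀ x ∈ C, ∀ x' ∈ C, hammingNorm x % 2 = hammingNorm x' % 2) → C.card ≤ n := by
    intro C hCA hpar
    apply class_le n hn hneven
    intro x hx x' hx' hne
    have hnd := hA x (hCA hx) x' (hCA hx') hne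
    have hw := wt_add n x x'
    have hp := hpar x hx x' hx'
    omega
  have h0 : (A.filter (fun x => hammingNorm x % 2 = 0)).card ≤ n := by
    apply hclass _ (Finset.filter_subset _ _)
    intro x hx x' hx'
    rw [Finset.mem_filter] at hx hx'
    rw [hx.2, hx'.2]
  have h1 : (A.filter (fun x => ¬hammingNorm x % 2 = 0)).card ≤ n := by
    apply hclass _ (Finset.filter_subset _ _)
    intro x hx x' hx'
    rw [Finset.mem_filter] at hx hx'
    have := hx.2; have := hx'.2
    omega
  omega
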